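/- Fix a prime p and a natural number N ≥ 1, and for m, j ∈ ℕ write q_j^{(m)} := ⌊j / p^m⌋. For each m let D^(m) be the ℤ_p-submodule of ℚ_p[X_1,…,X_N] spanned by the elements ξ^⟨k⟩_{(m)} := (∏_{i=1}^N q^{(m)}_{k_i}!/k_i!) · X_1^{k_1}⋯X_N^{k_N} for k ∈ ℕ^N. Then: (a) for m ≤ m' one has D^(m) ⊆ D^(m'); and (b) the union ⋃_{m ∈ ℕ} D^(m) equals the ℤ_p-submodule of ℚ_p[X_1,…,X_N] spanned by the divided-power monomials X_1^{k_1}⋯X_N^{k_N}/(k_1!⋯k_N!) for k ∈ ℕ^N. -/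

import Mathlib

open scoped BigOperators

/-- The element `ξ^⟨k⟩_{(m)} = (∏ q^{(m)}_{k_i}!/k_i!) · X^k` of `ℚ_p[X_1,…,X_N]`,
realizing the basis of the level-`m` distribution algebra `D^(m)(𝔾_a^N)`. -/
noncomputable def xiGa (p : ℕ) [Fact p.Prime] (m N : ℕ) (k : Fin N →₀ ℕ) :
    MvPolynomial (Fin N) ℚ_[p] :=
  (∏ i : Fin N,
      ((Nat.factorial (k i / p ^ m) : ℚ_[p]) / (Nat.factorial (k i) : ℚ_[p]))) •
    MvPolynomial.monomial k (1 : ℚ_[p])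

lemma xiGa_step (p : ℕ) [Fact p.Prime] (m m' N : ℕ) (h : m ≤ m') (k : Fin N →₀ ℕ) :
    xiGa p m N k =
      (∏ i : Fin N, ((k i / p ^ m).factorial / (k i / p ^ m').factorial : ℕ)) •
        xiGa p m' N k := by
  have hp : (1:ℕ) < p := (Fact.out : p.Prime).one_lt
  unfold xiGa
  rw [← Nat.cast_smul_eq_nsmul (ℚ_[p]), smul_smul]
  congr 1
  push_cast
  rw [← Finset.prod_mul_distrib]
  apply Finset.prod_congr rfl
  intro i _
  have hle : k i / p ^ m' ≤ k i / p ^ m :=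
    Nat.div_le_div_left (Nat.pow_le_pow_right (le_of_lt hp) h)
      (Nat.pow_pos (lt_trans Nat.zero_lt_one hp))
  have hdvd := Nat.factorial_dvd_factorial hle
  have hb : ((k i / p ^ m').factorial : ℚ_[p]) ≠ 0 := by
    exact_mod_cast (Nat.factorial_pos _).ne'
  have hk : ((k i).factorial : ℚ_[p]) ≠ 0 := by
    exact_mod_cast (Nat.factorial_pos _).ne'
  rw [Nat.cast_div hdvd hb]
  field_simp

lemma xiGa_divided (p : ℕ) [Fact p.Prime] (m N : ℕ) (k : Fin N →₀ ℕ) :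
    xiGa p m N k =
      (∏ i : Fin N, (k i / p ^ m).factorial) •
        ((∏ i : Fin N, ((Nat.factorial (k i) : ℚ_[p]))⁻¹) •
          MvPolynomial.monomial k (1 : ℚ_[p])) := by
  unfold xiGa
  rw [← Nat.cast_smul_eq_nsmul (ℚ_[p]), smul_smul]
  congr 1
  push_cast
  rw [← Finset.prod_mul_distrib]
  apply Finset.prod_congr rfl
  intro i _
  rw [div_eq_mul_inv]

/-- The lattices `D^(m)(𝔾_a^N) ⊆ ℚ_p[X_1,…,X_N]` increase with the level `m`,
and their union is the classical distribution algebra `Dist(𝔾_a^N)`, i.e. the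
`ℤ_p`-span of the divided-power monomials `X^k/k!`. -/
theorem stmt_12 (p : ℕ) [Fact p.Prime] (N : ℕ) (hN : 1 ≤ N) :
    (∀ m m' : ℕ, m ≤ m' →
      Submodule.span ℤ_[p] (Set.range (xiGa p m N)) ≤
        Submodule.span ℤ_[p] (Set.range (xiGa p m' N))) ∧
    (⋃ m : ℕ,
        (Submodule.span ℤ_[p] (Set.range (xiGa p m N)) :
          Set (MvPolynomial (Fin N) ℚ_[p]))) =
      (Submodule.span ℤ_[p]
        (Set.range fun k : Fin N →₀ ℕ =>
          (∏ i : Fin N, ((Nat.factorial (k i) : ℚ_[p]))⁻¹) •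
            MvPolynomial.monomial k (1 : ℚ_[p])) :
        Set (MvPolynomial (Fin N) ℚ_[p])) := by
  set D : ℕ → Submodule ℤ_[p] (MvPolynomial (Fin N) ℚ_[p]) :=
    fun m => Submodule.span ℤ_[p] (Set.range (xiGa p m N)) with hD
  have hmono : ∀ m m', m ≤ m' → D m ≤ D m' := by
    intro m m' h
    rw [hD]
    apply Submodule.span_le.2
    rintro _ ⟨k, rfl⟩
    rw [xiGa_step p m m' N h k]
    exact nsmul_mem (Submodule.subset_span (Set.mem_range_self k)) _
  refine ⟨hmono, ?_⟩
  set Dist : Submodule ℤ_[p] (MvPolynomial (Fin N) ℚ_[p]) :=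
    Submodule.span ℤ_[p]
      (Set.range fun k : Fin N →₀ ℕ =>
        (∏ i : Fin N, ((Nat.factorial (k i) : ℚ_[p]))⁻¹) •
          MvPolynomial.monomial k (1 : ℚ_[p])) with hDist
  have hmonoD : Monotone D := fun a b h => hmono a b h
  have hdir : Directed (· ≤ ·) D := hmonoD.directed_le
  rw [← Submodule.coe_iSup_of_directed D hdir]
  suffices h : iSup D = Dist by rw [h]
  apply le_antisymm
  · apply iSup_le
    intro m
    apply Submodule.span_le.2
    rintro _ ⟨k, rfl⟩
    rw [xiGa_divided p m N k]
    exact nsmul_mem (Submodule.subset_span (Set.mem_range_self k)) _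
  · apply Submodule.span_le.2
    rintro _ ⟨k, rfl⟩
    have hp : (1:ℕ) < p := (Fact.out : p.Prime).one_lt
    set B := Finset.univ.sup (fun i : Fin N => k i) with hB
    have hlt : ∀ i : Fin N, k i < p ^ B := by
      intro i
      calc k i ≤ B := Finset.le_sup (Finset.mem_univ i)
        _ < 2 ^ B := Nat.lt_two_pow_self
        _ ≤ p ^ B := Nat.pow_le_pow_left hp B
    have : xiGa p B N k =
        (∏ i : Fin N, ((Nat.factorial (k i) : ℚ_[p]))⁻¹) •
          MvPolynomial.monomial k (1 : ℚ_[p]) := by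
      unfold xiGa
      congr 1
      apply Finset.prod_congr rfl
      intro i _
      rw [Nat.div_eq_of_lt (hlt i), Nat.factorial_zero, Nat.cast_one, one_div]
    have hmem : ((∏ i : Fin N, ((Nat.factorial (k i) : ℚ_[p]))⁻¹) •
        MvPolynomial.monomial k (1 : ℚ_[p])) ∈ D B := by
      rw [← this]
      exact Submodule.subset_span (Set.mem_range_self k)
    exact (le_iSup D B) hmem
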